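/- For every positive definite symmetric bilinear form B on su(2) there exist a Lie algebra automorphism φ of su(2) and real numbers λ ≥ μ ≥ ν > 0 such that B(φ(X_i), φ(X_j)) = 0 for all i ≠ j, B(φ(X1), φ(X1)) = λ, B(φ(X2), φ(X2)) = μ, and B(φ(X3), φ(X3)) = ν. (That is, every left invariant metric on SU(2) is represented, up to automorphism, by the diagonal matrix M(λ,μ,ν) in the standard basis.) -/

import Mathlib

open Matrix Complex

attribute [local instance 100] LieRing.ofAssociativeRing

/-- `su(2)`: the real Lie algebra of traceless skew-Hermitian `2 × 2` complex matrices. -/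
def su2 : LieSubalgebra ℝ (Matrix (Fin 2) (Fin 2) ℂ) where
  carrier := {A | Aᴴ = -A ∧ A.trace = 0}
  zero_mem' := by simp
  add_mem' := by
    rintro A B ⟨hA1, hA2⟩ ⟨hB1, hB2⟩
    refine ⟨?_, ?_⟩
    · rw [conjTranspose_add, hA1, hB1]; abel
    · rw [trace_add, hA2, hB2]; ring
  smul_mem' := by
    rintro c A ⟨h1, h2⟩
    refine ⟨?_, ?_⟩
    · rw [conjTranspose_smul, h1]; simp
    · rw [trace_smul, h2]; simp
  lie_mem' := by
    rintro A B ⟨hA1, hA2⟩ ⟨hB1, hB2⟩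
    refine ⟨?_, ?_⟩
    · simp only [Ring.lie_def, conjTranspose_sub, conjTranspose_mul, hA1, hB1]
      simp [mul_comm]
    · simp only [Ring.lie_def, trace_sub, trace_mul_comm A B, sub_self]

/-- `X1 = (1/2)[[i,0],[0,−i]]`, as an element of `su(2)`. -/
noncomputable def X1 : ↥su2 :=
  ⟨!![I/2, 0; 0, -(I/2)], by
    constructor
    · ext i j
      fin_cases i <;> fin_cases j <;>
        norm_num [conjTranspose_apply, Complex.ext_iff]
    · simp [Matrix.trace_fin_two]⟩

/-- `X2 = (1/2)[[0,−1],[1,0]]`, as an element of `su(2)`. -/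
noncomputable def X2 : ↥su2 :=
  ⟨!![0, -(1/2 : ℂ); 1/2, 0], by
    constructor
    · ext i j
      fin_cases i <;> fin_cases j <;>
        norm_num [conjTranspose_apply, Complex.ext_iff]
    · simp [Matrix.trace_fin_two]⟩

/-- `X3 = (1/2)[[0,−i],[−i,0]]`, as an element of `su(2)`. -/
noncomputable def X3 : ↥su2 :=
  ⟨!![0, -(I/2); -(I/2), 0], by
    constructor
    · ext i j
      fin_cases i <;> fin_cases j <;>
        norm_num [conjTranspose_apply, Complex.ext_iff]
    · simp [Matrix.trace_fin_two]⟩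

namespace Su2Aux

lemma entry00_re (x : ↥su2) : ((x : Matrix (Fin 2) (Fin 2) ℂ) 0 0).re = 0 := by
  have h := x.2.1
  have h2 := congrFun (congrFun h 0) 0
  simp [Matrix.conjTranspose_apply, Complex.ext_iff] at h2
  linarith [h2]

lemma entry11 (x : ↥su2) : (x : Matrix (Fin 2) (Fin 2) ℂ) 1 1 = -(x : Matrix (Fin 2) (Fin 2) ℂ) 0 0 := by
  have h := x.2.2
  rw [Matrix.trace_fin_two] at h
  linear_combination h

lemma entry10 (x : ↥su2) : (x : Matrix (Fin 2) (Fin 2) ℂ) 1 0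
    = -(starRingEnd ℂ) ((x : Matrix (Fin 2) (Fin 2) ℂ) 0 1) := by
  have h := x.2.1
  have h2 := congrFun (congrFun h 1) 0
  simp [Matrix.conjTranspose_apply] at h2
  linear_combination h2

lemma coe_smul' (c : ℝ) (x : ↥su2) :
    ((c • x : ↥su2) : Matrix (Fin 2) (Fin 2) ℂ) = c • (x : Matrix (Fin 2) (Fin 2) ℂ) := rfl

lemma coe_add' (x y : ↥su2) :
    ((x + y : ↥su2) : Matrix (Fin 2) (Fin 2) ℂ) = (x : Matrix (Fin 2) (Fin 2) ℂ) + y := rfl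

/-- coordinates of an element of su2 w.r.t. X1, X2, X3 -/
noncomputable def coord : ↥su2 →ₗ[ℝ] (Fin 3 → ℝ) where
  toFun x := ![2 * ((x : Matrix (Fin 2) (Fin 2) ℂ) 0 0).im,
               -2 * ((x : Matrix (Fin 2) (Fin 2) ℂ) 0 1).re,
               -2 * ((x : Matrix (Fin 2) (Fin 2) ℂ) 0 1).im]
  map_add' x y := by
    funext k
    fin_cases k <;>
      simp [Matrix.add_apply, Complex.add_re, Complex.add_im] <;> ring
  map_smul' c x := by
    funext k
    fin_cases k <;>
      simp [coe_smul', Matrix.smul_apply, Complex.real_smul, Complex.mul_re,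
        Complex.mul_im] <;> ring

noncomputable def lincomb : (Fin 3 → ℝ) →ₗ[ℝ] ↥su2 where
  toFun v := v 0 • X1 + v 1 • X2 + v 2 • X3
  map_add' u v := by
    simp only [Pi.add_apply, add_smul]
    abel
  map_smul' c v := by
    simp only [Pi.smul_apply, smul_eq_mul, RingHom.id_apply, smul_add, smul_smul]

lemma coord_lincomb (v : Fin 3 → ℝ) : coord (lincomb v) = v := by
  funext k
  fin_cases k <;>
    simp [coord, lincomb, X1, X2, X3, coe_smul', coe_add',
      Matrix.smul_apply, Matrix.add_apply, Complex.ext_iff, Complex.real_smul,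
      Complex.mul_re, Complex.mul_im] <;> ring

lemma lincomb_coord (x : ↥su2) : lincomb (coord x) = x := by
  apply Subtype.ext
  have h00 := entry00_re x
  have h11 := entry11 x
  have h10 := entry10 x
  ext i j
  fin_cases i <;> fin_cases j <;>
    simp [coord, lincomb, X1, X2, X3, coe_smul', coe_add',
      Matrix.smul_apply, Matrix.add_apply, Complex.ext_iff, Complex.real_smul,
      Complex.mul_re, Complex.mul_im, h11, h10, h00] <;>
    ring_nf <;> simp [h00]

end Su2Aux
namespace Su2Aux

lemma bracket_coe (x y : ↥su2) : ((⁅x, y⁆ : ↥su2) : Matrix (Fin 2) (Fin 2) ℂ)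
    = (x : Matrix (Fin 2) (Fin 2) ℂ) * y - (y : Matrix (Fin 2) (Fin 2) ℂ) * x := rfl

lemma bX12 : ⁅X1, X2⁆ = X3 := by
  apply Subtype.ext
  rw [bracket_coe]
  simp only [X1, X2, X3]
  ext i j
  fin_cases i <;> fin_cases j <;>
    simp [Matrix.mul_apply, Fin.sum_univ_two] <;> ring_nf <;> simp [Complex.I_sq] <;> ring

lemma bX23 : ⁅X2, X3⁆ = X1 := by
  apply Subtype.ext
  rw [bracket_coe]
  simp only [X1, X2, X3]
  ext i j
  fin_cases i <;> fin_cases j <;>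
    simp [Matrix.mul_apply, Fin.sum_univ_two] <;> ring_nf <;> simp [Complex.I_sq] <;> ring

lemma bX31 : ⁅X3, X1⁆ = X2 := by
  apply Subtype.ext
  rw [bracket_coe]
  simp only [X1, X2, X3]
  ext i j
  fin_cases i <;> fin_cases j <;>
    simp [Matrix.mul_apply, Fin.sum_univ_two] <;> ring_nf <;> simp [Complex.I_sq] <;> ring

lemma bX21 : ⁅X2, X1⁆ = -X3 := by rw [← lie_skew, bX12]
lemma bX32 : ⁅X3, X2⁆ = -X1 := by rw [← lie_skew, bX23]
lemma bX13 : ⁅X1, X3⁆ = -X2 := by rw [← lie_skew, bX31]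

open Matrix in
lemma so3_cross {A : Matrix (Fin 3) (Fin 3) ℝ} (h1 : Aᵀ * A = 1) (h2 : A.det = 1)
    (u v : Fin 3 → ℝ) :
    A *ᵥ (crossProduct u v) = crossProduct (A *ᵥ u) (A *ᵥ v) := by
  have h1' : A * Aᵀ = 1 := mul_eq_one_comm.mp h1
  have key : ∀ w : Fin 3 → ℝ, w ⬝ᵥ (A *ᵥ (crossProduct u v))
      = w ⬝ᵥ (crossProduct (A *ᵥ u) (A *ᵥ v)) := by
    intro w
    set z := Aᵀ *ᵥ w with hz
    have hw : w = A *ᵥ z := by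
      rw [hz, Matrix.mulVec_mulVec, h1', Matrix.one_mulVec]
    have hmat : ∀ a b c : Fin 3 → ℝ,
        (Matrix.of ![A *ᵥ a, A *ᵥ b, A *ᵥ c]) = Matrix.of ![a, b, c] * Aᵀ := by
      intro a b c
      ext i j
      fin_cases i <;>
        simp [Matrix.mul_apply, Matrix.mulVec, dotProduct, mul_comm]
    have hdet : ∀ a b c : Fin 3 → ℝ,
        Matrix.det (Matrix.of ![A *ᵥ a, A *ᵥ b, A *ᵥ c]) = Matrix.det (Matrix.of ![a, b, c]) := by
      intro a b c
      rw [hmat, Matrix.det_mul, Matrix.det_transpose, h2, mul_one]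
    calc w ⬝ᵥ (A *ᵥ (crossProduct u v))
        = (A *ᵥ z) ⬝ᵥ (A *ᵥ (crossProduct u v)) := by rw [← hw]
      _ = ((A *ᵥ z) ᵥ* A) ⬝ᵥ (crossProduct u v) := by rw [Matrix.dotProduct_mulVec]
      _ = z ⬝ᵥ (crossProduct u v) := by
            rw [Matrix.vecMul_mulVec, h1, Matrix.vecMul_one]
      _ = Matrix.det (Matrix.of ![z, u, v]) := triple_product_eq_det z u v
      _ = Matrix.det (Matrix.of ![A *ᵥ z, A *ᵥ u, A *ᵥ v]) := (hdet z u v).symm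
      _ = (A *ᵥ z) ⬝ᵥ (crossProduct (A *ᵥ u) (A *ᵥ v)) := (triple_product_eq_det _ _ _).symm
      _ = w ⬝ᵥ (crossProduct (A *ᵥ u) (A *ᵥ v)) := by rw [← hw]
  funext k
  have h := key (Pi.single k 1)
  simpa [single_dotProduct] using h

end Su2Aux
namespace Su2Aux

lemma lincomb_apply (v : Fin 3 → ℝ) : lincomb v = v 0 • X1 + v 1 • X2 + v 2 • X3 := rfl

lemma coord_X1 : coord X1 = ![1, 0, 0] := by
  have h : X1 = lincomb ![1, 0, 0] := by simp [lincomb_apply]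
  rw [h, coord_lincomb]

lemma coord_X2 : coord X2 = ![0, 1, 0] := by
  have h : X2 = lincomb ![0, 1, 0] := by simp [lincomb_apply]
  rw [h, coord_lincomb]

lemma coord_X3 : coord X3 = ![0, 0, 1] := by
  have h : X3 = lincomb ![0, 0, 1] := by simp [lincomb_apply]
  rw [h, coord_lincomb]

lemma coord_bracket (x y : ↥su2) :
    coord ⁅x, y⁆ = crossProduct (coord x) (coord y) := by
  conv_lhs => rw [← lincomb_coord x, ← lincomb_coord y]
  generalize coord x = u
  generalize coord y = v
  rw [lincomb_apply, lincomb_apply]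
  simp only [add_lie, lie_add, smul_lie, lie_smul, lie_self, smul_zero, add_zero, zero_add,
    bX12, bX21, bX23, bX32, bX31, bX13, smul_neg, map_add, _root_.map_smul, map_neg]
  funext k
  fin_cases k <;> simp [cross_apply, coord_X1, coord_X2, coord_X3] <;> ring

lemma B_lincomb (B : ↥su2 →ₗ[ℝ] ↥su2 →ₗ[ℝ] ℝ) (u v : Fin 3 → ℝ) :
    B (lincomb u) (lincomb v)
      = u ⬝ᵥ ((Matrix.of fun i j => B (![X1, X2, X3] i) (![X1, X2, X3] j)) *ᵥ v) := by
  rw [lincomb_apply, lincomb_apply]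
  simp only [map_add, _root_.map_smul, LinearMap.add_apply, LinearMap.smul_apply, smul_eq_mul,
    Matrix.mulVec, dotProduct, Fin.sum_univ_three, Matrix.of_apply,
    Matrix.cons_val_zero, Matrix.cons_val_one, Matrix.head_cons, Matrix.cons_val_two,
    Matrix.tail_cons]
  ring

end Su2Aux
open Su2Aux in
set_option maxHeartbeats 1000000 in
/-- Every positive definite symmetric bilinear form on `su(2)` (i.e. every left invariant
metric on `SU(2)`) is represented, up to a Lie algebra automorphism, by the diagonal matrix
`M(λ,μ,ν)` with `λ ≥ μ ≥ ν > 0` in the standard basis `X1, X2, X3`. -/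
theorem metric_diagonalizable (B : ↥su2 →ₗ[ℝ] ↥su2 →ₗ[ℝ] ℝ)
    (hsymm : ∀ x y : ↥su2, B x y = B y x)
    (hpos : ∀ x : ↥su2, x ≠ 0 → 0 < B x x) :
    ∃ (φ : ↥su2 ≃ₗ⁅ℝ⁆ ↥su2) (l m n : ℝ),
      l ≥ m ∧ m ≥ n ∧ n > 0 ∧
      (∀ i j : Fin 3, i ≠ j → B (φ (![X1, X2, X3] i)) (φ (![X1, X2, X3] j)) = 0) ∧
      B (φ X1) (φ X1) = l ∧ B (φ X2) (φ X2) = m ∧ B (φ X3) (φ X3) = n := by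
  classical
  set M : Matrix (Fin 3) (Fin 3) ℝ :=
    Matrix.of (fun i j => B (![X1, X2, X3] i) (![X1, X2, X3] j)) with hMdef
  have hMposdef : M.PosDef := by
    constructor
    · rw [hMdef]
      ext i j
      simp only [Matrix.conjTranspose_apply, Matrix.of_apply, star_trivial]
      exact hsymm _ _
    · intro x hx
      have hx' : lincomb x ≠ 0 := by
        intro h
        apply hx
        rw [← Finsupp.coe_eq_zero, ← coord_lincomb x, h, map_zero]
      have hp := hpos _ hx'
      rw [B_lincomb B x x, ← hMdef] at hp
      simpa [dotProduct, mulVec, Finsupp.sum_fintype, Finset.mul_sum, mul_assoc] using hp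
  have hMh : M.IsHermitian := hMposdef.1
  set U : Matrix (Fin 3) (Fin 3) ℝ :=
    ((Matrix.IsHermitian.eigenvectorUnitary hMh : Matrix.unitaryGroup (Fin 3) ℝ) :
      Matrix (Fin 3) (Fin 3) ℝ) with hUdef
  set ev : Fin 3 → ℝ := hMh.eigenvalues with hevdef
  have hstarU : star U = Uᵀ := by
    ext i j; simp [Matrix.star_apply]
  have hUmem : U ∈ Matrix.unitaryGroup (Fin 3) ℝ :=
    (Matrix.IsHermitian.eigenvectorUnitary hMh).2
  have hUorth : Uᵀ * U = 1 := by
    rw [← hstarU]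
    exact Matrix.mem_unitaryGroup_iff'.mp hUmem
  have hUMU : Uᵀ * M * U = Matrix.diagonal ev := by
    rw [← hstarU]
    have h := hMh.conjStarAlgAut_star_eigenvectorUnitary
    rw [Unitary.conjStarAlgAut_star_apply] at h
    rw [← hUdef] at h
    rw [h, RCLike.ofReal_real_eq_id]
    rfl
  have hevpos : ∀ i, 0 < ev i := fun i => hMposdef.eigenvalues_pos i
  -- sorting permutation (descending)
  set σ : Equiv.Perm (Fin 3) :=
    (Fin.revPerm : Equiv.Perm (Fin 3)).trans (Tuple.sort ev) with hσdef
  have hmono := Tuple.monotone_sort ev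
  -- the sign
  set s : ℝ := U.det * ((Equiv.Perm.sign σ : ℤ) : ℝ) with hsdef
  have hdetU2 : U.det * U.det = 1 := by
    have h := congrArg Matrix.det hUorth
    rwa [Matrix.det_mul, Matrix.det_transpose, Matrix.det_one] at h
  have hsig2 : ((Equiv.Perm.sign σ : ℤ) : ℝ) * ((Equiv.Perm.sign σ : ℤ) : ℝ) = 1 := by
    rcases Int.units_eq_one_or (Equiv.Perm.sign σ) with h | h <;> rw [h] <;> norm_num
  have hss : s * s = 1 := by
    calc s * s
        = (U.det * U.det) * (((Equiv.Perm.sign σ : ℤ) : ℝ) * ((Equiv.Perm.sign σ : ℤ) : ℝ)) := by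
          rw [hsdef]; ring
      _ = 1 := by rw [hdetU2, hsig2, mul_one]
  set ε : Fin 3 → ℝ := ![s, 1, 1] with hεdef
  have hεsq : ∀ i, ε i * ε i = 1 := by
    intro i; fin_cases i <;> simp [hεdef, hss]
  set V : Matrix (Fin 3) (Fin 3) ℝ := Matrix.of (fun k i => ε i * U k (σ i)) with hVdef
  have hconj : ∀ (W : Matrix (Fin 3) (Fin 3) ℝ) (i j : Fin 3),
      (Vᵀ * W * V) i j = ε i * ε j * ((Uᵀ * W * U) (σ i) (σ j)) := by
    intro W i j
    simp only [hVdef, Matrix.mul_apply, Matrix.transpose_apply, Fin.sum_univ_three,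
      Matrix.of_apply]
    ring
  have hVorth : Vᵀ * V = 1 := by
    ext i j
    have h1 : Vᵀ * V = Vᵀ * 1 * V := by rw [Matrix.mul_one]
    rw [h1, hconj 1 i j, show Uᵀ * 1 * U = Uᵀ * U from by rw [Matrix.mul_one], hUorth]
    by_cases hij : i = j
    · subst hij; simp [Matrix.one_apply, hεsq i]
    · simp [Matrix.one_apply, hij, fun h => hij (σ.injective h)]
  have hVMV : ∀ i j : Fin 3, (Vᵀ * M * V) i j = if i = j then ev (σ i) else 0 := by
    intro i j
    rw [hconj M i j, hUMU]
    by_cases hij : i = j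
    · subst hij
      simp [Matrix.diagonal_apply_eq, hεsq i]
    · rw [Matrix.diagonal_apply_ne _ (fun h => hij (σ.injective h))]
      simp [hij]
  have hVdet : V.det = 1 := by
    have h1 : V = Matrix.of (fun k i => ε i * (U.submatrix id σ) k i) := rfl
    rw [h1, Matrix.det_mul_row, Matrix.det_permute']
    have hprod : (∏ i, ε i) = s := by
      rw [Fin.prod_univ_three]; simp [hεdef]
    rw [hprod]
    push_cast
    calc s * (((Equiv.Perm.sign σ : ℤ) : ℝ) * U.det)
        = (U.det * U.det) * (((Equiv.Perm.sign σ : ℤ) : ℝ) * ((Equiv.Perm.sign σ : ℤ) : ℝ)) := by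
          rw [hsdef]; ring
      _ = 1 := by rw [hdetU2, hsig2, mul_one]
  have hVVt : V * Vᵀ = 1 := mul_eq_one_comm.mp hVorth
  set ψ : ↥su2 ≃ₗ[ℝ] ↥su2 := LinearEquiv.ofLinear
    (lincomb ∘ₗ V.mulVecLin ∘ₗ coord)
    (lincomb ∘ₗ Vᵀ.mulVecLin ∘ₗ coord)
    (by
      ext x
      simp only [LinearMap.comp_apply, LinearMap.id_apply, LinearMap.id_coe, id_eq,
        Matrix.mulVecLin_apply]
      rw [coord_lincomb, Matrix.mulVec_mulVec, hVVt, Matrix.one_mulVec, lincomb_coord])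
    (by
      ext x
      simp only [LinearMap.comp_apply, LinearMap.id_apply, LinearMap.id_coe, id_eq,
        Matrix.mulVecLin_apply]
      rw [coord_lincomb, Matrix.mulVec_mulVec, hVorth, Matrix.one_mulVec, lincomb_coord])
    with hψdef
  have hψap : ∀ x : ↥su2, ψ x = lincomb (V *ᵥ coord x) := fun x => rfl
  have h3 : ∀ u v : Fin 3 → ℝ, lincomb (crossProduct u v) = ⁅lincomb u, lincomb v⁆ := by
    intro u v
    have h := coord_bracket (lincomb u) (lincomb v)
    rw [coord_lincomb, coord_lincomb] at h
    rw [← h, lincomb_coord]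
  have hlie : ∀ x y : ↥su2, ψ ⁅x, y⁆ = ⁅ψ x, ψ y⁆ := by
    intro x y
    rw [hψap, hψap, hψap, coord_bracket, so3_cross hVorth hVdet, h3]
  set φ : ↥su2 ≃ₗ⁅ℝ⁆ ↥su2 :=
    { toLieHom := { toLinearMap := (ψ : ↥su2 →ₗ[ℝ] ↥su2),
                    map_lie' := fun {x y} => hlie x y },
      invFun := ψ.symm,
      left_inv := ψ.left_inv,
      right_inv := ψ.right_inv } with hφdef
  have hφap : ∀ x : ↥su2, φ x = lincomb (V *ᵥ coord x) := fun x => rfl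
  have hXv : ∀ i : Fin 3, coord (![X1, X2, X3] i) = Pi.single i 1 := by
    intro i
    fin_cases i <;>
      · funext k
        fin_cases k <;>
          simp [coord_X1, coord_X2, coord_X3, Pi.single_apply]
  have hBφ : ∀ i j : Fin 3,
      B (φ (![X1, X2, X3] i)) (φ (![X1, X2, X3] j)) = (Vᵀ * M * V) i j := by
    intro i j
    rw [hφap, hφap, hXv, hXv, B_lincomb B, ← hMdef, Matrix.mulVec_mulVec]
    have e1 : V *ᵥ Pi.single i 1 = fun k => V k i := by
      funext k; simp [Matrix.mulVec_single]
    have e2 : (M * V) *ᵥ Pi.single j 1 = fun k => (M * V) k j := by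
      funext k; simp [Matrix.mulVec_single]
    rw [e1, e2, show Vᵀ * M * V = Vᵀ * (M * V) from by rw [Matrix.mul_assoc]]
    simp only [Matrix.mul_apply, Matrix.transpose_apply, dotProduct]
  have hrev0 : (Fin.revPerm : Equiv.Perm (Fin 3)) 0 = 2 := by decide
  have hrev1 : (Fin.revPerm : Equiv.Perm (Fin 3)) 1 = 1 := by decide
  have hrev2 : (Fin.revPerm : Equiv.Perm (Fin 3)) 2 = 0 := by decide
  have hσ0 : σ 0 = Tuple.sort ev 2 := by rw [hσdef, Equiv.trans_apply, hrev0]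
  have hσ1 : σ 1 = Tuple.sort ev 1 := by rw [hσdef, Equiv.trans_apply, hrev1]
  have hσ2 : σ 2 = Tuple.sort ev 0 := by rw [hσdef, Equiv.trans_apply, hrev2]
  refine ⟨φ, ev (σ 0), ev (σ 1), ev (σ 2), ?_, ?_, hevpos _, ?_, ?_, ?_, ?_⟩
  · rw [hσ0, hσ1]
    exact hmono (show (1 : Fin 3) ≤ 2 by decide)
  · rw [hσ1, hσ2]
    exact hmono (show (0 : Fin 3) ≤ 1 by decide)
  · intro i j hij
    rw [hBφ i j, hVMV i j, if_neg hij]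
  · have h := hBφ 0 0
    simp only [Matrix.cons_val_zero] at h
    rw [h, hVMV 0 0, if_pos rfl]
  · have h := hBφ 1 1
    simp only [Matrix.cons_val_one, Matrix.head_cons, Matrix.cons_val_zero] at h
    rw [h, hVMV 1 1, if_pos rfl]
  · have h := hBφ 2 2
    have h22 : (![X1, X2, X3] : Fin 3 → ↥su2) 2 = X3 := rfl
    rw [h22] at h
    rw [h, hVMV 2 2, if_pos rfl]
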